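/- arXiv:2303.02853 — 4 statements merged into one kernel-verified Lean document; each statement's English description precedes it below -/
import Mathlib

section
/- (Rule of Pentagons) Let n ≥ 5 and let A and B be the z-matrix and w-matrix of a singular sequence and C = A + B. Let i_1, i_2, i_3, i_4, i_5 ∈ {1,…,n} be pairwise distinct and set i_0 = i_5. Suppose the product over k = 0,…,4 of c_{i_k i_{k+1}} is nonzero. Define N_z = #{ k ∈ {0,1,2,3,4} : (a_{i_k i_{k+1}}, b_{i_k i_{k+1}}) = (1,0) }, N_w = #{ k : (a_{i_k i_{k+1}}, b_{i_k i_{k+1}}) = (0,1) }, and N_{zw} = #{ k : (a_{i_k i_{k+1}}, b_{i_k i_{k+1}}) = (1,1) }. Then N_z ≠ 1, N_w ≠ 1, and (N_z, N_w, N_{zw}) is neither (4, 0, 1) nor (0, 4, 1). -/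
open Filter Finset

/-- `Zq δ z k l` is the quantity `Z_{lk} = δ_{kl}^3 · (z_k − z_l)`
(and, applied to `w`, the quantity `W_{lk}`). -/
noncomputable def Zq {n : ℕ} (δ : Fin n → Fin n → ℂ) (z : Fin n → ℂ) (k l : Fin n) : ℂ :=
  δ k l ^ 3 * (z k - z l)

/-- A singular sequence of normalized central configurations for the masses `m`:
sequences `z^{(N)}, w^{(N)} ∈ ℂ^n`, symmetric `δ^{(N)}`, and positive reals `ε_N → 0`
such that every term satisfies the central configuration equations
`z_k = ∑_{l≠k} m_l Z_{lk}`, `w_k = ∑_{l≠k} m_l W_{lk}`, the normalization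
`δ_{kl}^2 z_{kl} w_{kl} = 1` (`k ≠ l`), the maximum of the `|z_k|, |Z_{kl}|`
(resp. `|w_k|, |W_{kl}|`) equals `ε_N^{-2}`, and all the sequences
`ε_N^2 z_k, ε_N^2 w_k, ε_N^2 Z_{kl}, ε_N^2 W_{kl}` converge. -/
structure SingularSeq (n : ℕ) (m : Fin n → ℂ) : Type where
  z : ℕ → Fin n → ℂ
  w : ℕ → Fin n → ℂ
  delta : ℕ → Fin n → Fin n → ℂ
  eps : ℕ → ℝ
  eps_pos : ∀ N, 0 < eps N
  eps_lim : Tendsto eps atTop (nhds 0)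
  delta_symm : ∀ N, ∀ k l : Fin n, delta N k l = delta N l k
  eq_z : ∀ N, ∀ k : Fin n, z N k = ∑ l ∈ univ.erase k, m l * Zq (delta N) (z N) k l
  eq_w : ∀ N, ∀ k : Fin n, w N k = ∑ l ∈ univ.erase k, m l * Zq (delta N) (w N) k l
  normalize : ∀ N, ∀ k l : Fin n, k ≠ l →
    delta N k l ^ 2 * (z N l - z N k) * (w N l - w N k) = 1
  maxZ : ∀ N, IsGreatest
      ({x : ℝ | ∃ k, x = ‖z N k‖} ∪
        {x : ℝ | ∃ k l, k ≠ l ∧ x = ‖Zq (delta N) (z N) k l‖})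
      (eps N ^ (-2 : ℤ))
  maxW : ∀ N, IsGreatest
      ({x : ℝ | ∃ k, x = ‖w N k‖} ∪
        {x : ℝ | ∃ k l, k ≠ l ∧ x = ‖Zq (delta N) (w N) k l‖})
      (eps N ^ (-2 : ℤ))
  conv_z : ∀ k : Fin n, ∃ L : ℂ,
    Tendsto (fun N => (eps N : ℂ) ^ 2 * z N k) atTop (nhds L)
  conv_w : ∀ k : Fin n, ∃ L : ℂ,
    Tendsto (fun N => (eps N : ℂ) ^ 2 * w N k) atTop (nhds L)
  conv_Z : ∀ k l : Fin n, k ≠ l → ∃ L : ℂ,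
    Tendsto (fun N => (eps N : ℂ) ^ 2 * Zq (delta N) (z N) k l) atTop (nhds L)
  conv_W : ∀ k l : Fin n, k ≠ l → ∃ L : ℂ,
    Tendsto (fun N => (eps N : ℂ) ^ 2 * Zq (delta N) (w N) k l) atTop (nhds L)

/-- `A` and `B` are the z-matrix and the w-matrix of the singular sequence `S`:
symmetric `{0,1}`-matrices whose entries record which of the (convergent) sequences
`ε_N^2 z_i`, `ε_N^2 Z_{ij}` (resp. `ε_N^2 w_i`, `ε_N^2 W_{ij}`) have nonzero limit. -/
structure IsZWMatrices {n : ℕ} {m : Fin n → ℂ} (S : SingularSeq n m)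
    (A B : Matrix (Fin n) (Fin n) ℕ) : Prop where
  zeroOne_A : ∀ i j, A i j = 0 ∨ A i j = 1
  symm_A : ∀ i j, A i j = A j i
  zeroOne_B : ∀ i j, B i j = 0 ∨ B i j = 1
  symm_B : ∀ i j, B i j = B j i
  diag_A : ∀ i, A i i = 1 ↔
    ¬ Tendsto (fun N => (S.eps N : ℂ) ^ 2 * S.z N i) atTop (nhds 0)
  off_A : ∀ i j, i ≠ j → (A i j = 1 ↔
    ¬ Tendsto (fun N => (S.eps N : ℂ) ^ 2 * Zq (S.delta N) (S.z N) i j) atTop (nhds 0))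
  diag_B : ∀ i, B i i = 1 ↔
    ¬ Tendsto (fun N => (S.eps N : ℂ) ^ 2 * S.w N i) atTop (nhds 0)
  off_B : ∀ i j, i ≠ j → (B i j = 1 ↔
    ¬ Tendsto (fun N => (S.eps N : ℂ) ^ 2 * Zq (S.delta N) (S.w N) i j) atTop (nhds 0))


lemma atTop_of_pow4 {f : ℕ → ℝ} (h0 : ∀ N, 0 ≤ f N)
    (h : Tendsto (fun N => f N ^ 4) atTop atTop) : Tendsto f atTop atTop := by
  rw [tendsto_atTop] at h ⊢
  intro b
  filter_upwards [h ((max b 0) ^ 4 + 1)] with N hN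
  by_contra hb
  push_neg at hb
  have h1 : f N < max b 0 := lt_of_lt_of_le hb (le_max_left _ _)
  have h2 : f N ^ 4 < (max b 0) ^ 4 := by
    apply pow_lt_pow_left₀ h1 (h0 N); norm_num
  linarith

lemma tendsto_zero_of_pow4 {f : ℕ → ℂ} (h : Tendsto (fun N => f N ^ 4) atTop (nhds 0)) :
    Tendsto f atTop (nhds 0) := by
  rw [Metric.tendsto_atTop] at h ⊢
  intro e he
  obtain ⟨N₀, hN₀⟩ := h ((min e 1) ^ 4) (by positivity)
  refine ⟨N₀, fun n hn => ?_⟩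
  have h1 := hN₀ n hn
  rw [dist_zero_right, norm_pow] at h1
  rw [dist_zero_right]
  have h2 : ‖f n‖ < min e 1 := by
    by_contra hc
    push_neg at hc
    exact absurd h1 (not_lt.2 (pow_le_pow_left₀ (by positivity) hc 4))
  exact lt_of_lt_of_le h2 (min_le_left _ _)

lemma edge_main (eps : ℕ → ℝ) (heps : ∀ N, 0 < eps N)
    (u w d : ℕ → ℂ) (hnorm : ∀ N, d N ^ 2 * u N * w N = 1)
    {α β : ℂ}
    (hα : Tendsto (fun N => (eps N : ℂ) ^ 2 * (d N ^ 3 * u N)) atTop (nhds α))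
    (hβ : Tendsto (fun N => (eps N : ℂ) ^ 2 * (d N ^ 3 * w N)) atTop (nhds β)) :
    (α ≠ 0 → β = 0 → Tendsto (fun N => ‖u N / (eps N : ℂ)‖) atTop atTop) ∧
    (α = 0 → β ≠ 0 → Tendsto (fun N => u N / (eps N : ℂ)) atTop (nhds 0)) ∧
    (α ≠ 0 → β ≠ 0 →
      (∃ L, L ≠ 0 ∧ Tendsto (fun N => (u N / (eps N : ℂ)) ^ 4) atTop (nhds L)) ∧
      ¬ Tendsto (fun N => u N / (eps N : ℂ)) atTop (nhds 0)) := by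
  have hε : ∀ N, (eps N : ℂ) ≠ 0 := fun N => by
    exact_mod_cast (heps N).ne'
  have hw : ∀ N, w N ≠ 0 := by
    intro N h0
    have h := hnorm N
    rw [h0] at h; simp at h
  have hd : ∀ N, d N ≠ 0 := by
    intro N h0
    have h := hnorm N
    rw [h0] at h; simp at h
  have hew : ∀ N, (eps N : ℂ) ^ 2 * (d N ^ 3 * w N) ≠ 0 := fun N => by
    apply mul_ne_zero (pow_ne_zero _ (hε N)) (mul_ne_zero (pow_ne_zero _ (hd N)) (hw N))
  have key : ∀ N, (u N / (eps N : ℂ)) ^ 4 =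
      ((eps N : ℂ) ^ 2 * (d N ^ 3 * u N)) / ((eps N : ℂ) ^ 2 * (d N ^ 3 * w N)) ^ 3 := by
    intro N
    rw [div_pow, div_eq_div_iff (pow_ne_zero 4 (hε N)) (pow_ne_zero 3 (hew N))]
    linear_combination ((eps N : ℂ) ^ 6 * d N ^ 3 * u N *
      ((d N ^ 2 * u N * w N) ^ 2 + d N ^ 2 * u N * w N + 1)) * (hnorm N)
  refine ⟨?_, ?_, ?_⟩
  · intro hα0 hβ0
    have hβ' : Tendsto (fun N => (eps N : ℂ) ^ 2 * (d N ^ 3 * w N)) atTop (nhds 0) := hβ0 ▸ hβ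
    have h1 : Tendsto (fun N => ‖(eps N : ℂ) ^ 2 * (d N ^ 3 * u N)‖) atTop
        (nhds (‖α‖)) := (continuous_norm.tendsto α).comp hα
    have h2 : Tendsto (fun N => ‖(eps N : ℂ) ^ 2 * (d N ^ 3 * w N)‖ ^ 3) atTop
        (nhds 0) := by
      have := ((continuous_norm.tendsto 0).comp hβ').pow 3
      simpa using this
    have h2' : Tendsto (fun N => ‖(eps N : ℂ) ^ 2 * (d N ^ 3 * w N)‖ ^ 3) atTop
        (nhdsWithin 0 (Set.Ioi 0)) := by
      apply tendsto_nhdsWithin_of_tendsto_nhds_of_eventually_within _ h2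
      exact Eventually.of_forall fun N =>
        pow_pos (norm_pos_iff.mpr (hew N)) 3
    have h4 : Tendsto (fun N => ‖(eps N : ℂ) ^ 2 * (d N ^ 3 * u N)‖ *
        (‖(eps N : ℂ) ^ 2 * (d N ^ 3 * w N)‖ ^ 3)⁻¹) atTop atTop :=
      Filter.Tendsto.pos_mul_atTop (norm_pos_iff.mpr hα0) h1 h2'.inv_tendsto_nhdsGT_zero
    have h5 : Tendsto (fun N => ‖u N / (eps N : ℂ)‖ ^ 4) atTop atTop := by
      apply h4.congr
      intro N
      rw [show ‖u N / (eps N : ℂ)‖ ^ 4 = ‖(u N / (eps N : ℂ)) ^ 4‖ from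
        (norm_pow _ _).symm, key N, norm_div, norm_pow, div_eq_mul_inv]
    exact atTop_of_pow4 (fun N => norm_nonneg _) h5
  · intro hα0 hβ0
    have hL : Tendsto (fun N => (u N / (eps N : ℂ)) ^ 4) atTop (nhds (α / β ^ 3)) :=
      ((hα.div (hβ.pow 3) (pow_ne_zero 3 hβ0)).congr fun N => (key N).symm)
    rw [hα0, zero_div] at hL
    exact tendsto_zero_of_pow4 hL
  · intro hα0 hβ0
    have hL : Tendsto (fun N => (u N / (eps N : ℂ)) ^ 4) atTop (nhds (α / β ^ 3)) :=
      ((hα.div (hβ.pow 3) (pow_ne_zero 3 hβ0)).congr fun N => (key N).symm)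
    have hLne : α / β ^ 3 ≠ 0 := div_ne_zero hα0 (pow_ne_zero _ hβ0)
    refine ⟨⟨α / β ^ 3, hLne, hL⟩, ?_⟩
    intro h
    have h4 := h.pow 4
    rw [show (0 : ℂ) ^ 4 = 0 by norm_num] at h4
    exact hLne (tendsto_nhds_unique hL h4)


lemma fin3_cases (x : Fin 3) : x = 0 ∨ x = 1 ∨ x = 2 := by fin_cases x <;> simp

lemma pentagon_aux (g : Fin 5 → ℕ → ℂ) (hsum : ∀ N, ∑ k : Fin 5, g k N = 0)
    (cls : Fin 5 → Fin 3)
    (h0 : ∀ k, cls k = 0 → Tendsto (fun N => ‖g k N‖) atTop atTop)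
    (h1 : ∀ k, cls k = 1 → Tendsto (g k) atTop (nhds 0))
    (h2 : ∀ k, cls k = 2 →
      (∃ L, L ≠ 0 ∧ Tendsto (fun N => (g k N) ^ 4) atTop (nhds L)) ∧
      ¬ Tendsto (g k) atTop (nhds 0)) :
    (univ.filter fun k => cls k = 0).card ≠ 1 ∧
    ¬ ((univ.filter fun k => cls k = 0).card = 0 ∧
       (univ.filter fun k => cls k = 2).card = 1) := by
  constructor
  · intro hcard
    obtain ⟨k0, hk0⟩ := Finset.card_eq_one.mp hcard
    have hcls0 : cls k0 = 0 := by
      have : k0 ∈ univ.filter fun k => cls k = 0 := by rw [hk0]; exact mem_singleton_self k0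
      exact (mem_filter.mp this).2
    have hother : ∀ k, k ≠ k0 → cls k ≠ 0 := by
      intro k hk hc
      apply hk
      have : k ∈ univ.filter fun k => cls k = 0 := mem_filter.mpr ⟨mem_univ k, hc⟩
      rw [hk0] at this
      exact mem_singleton.mp this
    have hbd : ∀ k : Fin 5, ∃ M : ℝ, ∀ᶠ N in atTop, k ≠ k0 → ‖g k N‖ ≤ M := by
      intro k
      by_cases hk : k = k0
      · exact ⟨0, Eventually.of_forall fun N h => absurd hk h⟩
      rcases fin3_cases (cls k) with hc | hc | hc
      · exact absurd hc (hother k hk)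
      · have habs : Tendsto (fun N => ‖g k N‖) atTop (nhds 0) := by
          simpa using (h1 k hc).norm
        exact ⟨1, (habs.eventually (eventually_le_nhds one_pos)).mono fun N hN _ => hN⟩
      · obtain ⟨⟨L, _, hL⟩, _⟩ := h2 k hc
        have habs : Tendsto (fun N => ‖g k N‖ ^ 4) atTop (nhds (‖L‖)) := by
          have := (continuous_norm.tendsto L).comp hL
          apply this.congr
          intro N
          simp [norm_pow]
        refine ⟨max (‖L‖ + 1) 1, ?_⟩
        have hev : ∀ᶠ N in atTop, ‖g k N‖ ^ 4 ≤ ‖L‖ + 1 :=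
          habs.eventually (eventually_le_nhds (lt_add_one _))
        refine hev.mono fun N hN _ => ?_
        rcases le_total (‖g k N‖) 1 with h | h
        · exact le_trans h (le_max_right _ _)
        · exact le_trans (le_trans (le_self_pow₀ h (by norm_num)) hN) (le_max_left _ _)
    choose M hM using hbd
    have hev1 : ∀ᶠ N in atTop, ∀ k, k ≠ k0 → ‖g k N‖ ≤ M k :=
      Filter.eventually_all.mpr hM
    set B : ℝ := ∑ k ∈ univ.erase k0, M k with hB
    have hev2 : ∀ᶠ N in atTop, B + 1 ≤ ‖g k0 N‖ :=
      (h0 k0 hcls0).eventually_ge_atTop (B + 1)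
    obtain ⟨N, hN1, hN2⟩ := (hev1.and hev2).exists
    have hgk0 : g k0 N = -∑ k ∈ univ.erase k0, g k N := by
      have := Finset.sum_erase_add univ (fun k => g k N) (mem_univ k0)
      rw [hsum N] at this
      linear_combination this
    have hle : ‖g k0 N‖ ≤ B := by
      rw [hgk0, norm_neg]
      refine le_trans (norm_sum_le _ _) ?_
      apply Finset.sum_le_sum
      intro k hk
      exact hN1 k (Finset.ne_of_mem_erase hk)
    linarith
  · rintro ⟨hc0, hc2⟩
    have hno0 : ∀ k, cls k ≠ 0 := by
      intro k hc
      have := Finset.card_eq_zero.mp hc0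
      have hk : k ∈ univ.filter fun k => cls k = 0 := mem_filter.mpr ⟨mem_univ k, hc⟩
      rw [this] at hk
      exact absurd hk (notMem_empty k)
    obtain ⟨k1, hk1⟩ := Finset.card_eq_one.mp hc2
    have hcls1 : cls k1 = 2 := by
      have : k1 ∈ univ.filter fun k => cls k = 2 := by rw [hk1]; exact mem_singleton_self k1
      exact (mem_filter.mp this).2
    have hother : ∀ k, k ≠ k1 → cls k = 1 := by
      intro k hk
      rcases fin3_cases (cls k) with hc | hc | hc
      · exact absurd hc (hno0 k)
      · exact hc
      · exfalso; apply hk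
        have : k ∈ univ.filter fun k => cls k = 2 := mem_filter.mpr ⟨mem_univ k, hc⟩
        rw [hk1] at this
        exact mem_singleton.mp this
    have hlim : Tendsto (g k1) atTop (nhds 0) := by
      have hsum0 : Tendsto (fun N => ∑ k ∈ univ.erase k1, g k N) atTop (nhds 0) := by
        have : Tendsto (fun N => ∑ k ∈ univ.erase k1, g k N) atTop
            (nhds (∑ k ∈ univ.erase k1, (0 : ℂ))) :=
          tendsto_finset_sum _ fun k hk => h1 k (hother k (Finset.ne_of_mem_erase hk))
        simpa using this
      have : Tendsto (fun N => -∑ k ∈ univ.erase k1, g k N) atTop (nhds 0) := by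
        simpa using hsum0.neg
      apply this.congr
      intro N
      have := Finset.sum_erase_add univ (fun k => g k N) (mem_univ k1)
      rw [hsum N] at this
      linear_combination -this
    exact (h2 k1 hcls1).2 hlim

lemma telescope5 (f : Fin 5 → ℂ) : ∑ k : Fin 5, (f k - f (k + 1)) = 0 := by
  rw [Finset.sum_sub_distrib]
  rw [show ∑ k : Fin 5, f (k + 1) = ∑ k : Fin 5, f k from
    Fintype.sum_equiv (Equiv.addRight (1 : Fin 5)) (fun k => f (k + 1)) f (fun k => rfl)]
  ring

lemma edge_facts (eps : ℕ → ℝ) (heps : ∀ N, 0 < eps N)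
    (u w d : ℕ → ℂ) (hnorm : ∀ N, d N ^ 2 * u N * w N = 1)
    (a b : ℕ)
    (hZ : ∃ αL, Tendsto (fun N => (eps N : ℂ) ^ 2 * (d N ^ 3 * u N)) atTop (nhds αL))
    (hW : ∃ βL, Tendsto (fun N => (eps N : ℂ) ^ 2 * (d N ^ 3 * w N)) atTop (nhds βL))
    (ha : a = 1 ↔ ¬ Tendsto (fun N => (eps N : ℂ) ^ 2 * (d N ^ 3 * u N)) atTop (nhds 0))
    (hb : b = 1 ↔ ¬ Tendsto (fun N => (eps N : ℂ) ^ 2 * (d N ^ 3 * w N)) atTop (nhds 0)) :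
    (a = 1 → b = 0 → Tendsto (fun N => ‖u N / (eps N : ℂ)‖) atTop atTop) ∧
    (a = 0 → b = 1 → Tendsto (fun N => u N / (eps N : ℂ)) atTop (nhds 0)) ∧
    (a = 1 → b = 1 →
      (∃ L, L ≠ 0 ∧ Tendsto (fun N => (u N / (eps N : ℂ)) ^ 4) atTop (nhds L)) ∧
      ¬ Tendsto (fun N => u N / (eps N : ℂ)) atTop (nhds 0)) := by
  obtain ⟨α, hα⟩ := hZ
  obtain ⟨β, hβ⟩ := hW
  have hair : a = 1 ↔ α ≠ 0 := by
    rw [ha]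
    constructor
    · intro hnt h0; exact hnt (h0 ▸ hα)
    · intro h0 hT; exact h0 (tendsto_nhds_unique hα hT)
  have hbir : b = 1 ↔ β ≠ 0 := by
    rw [hb]
    constructor
    · intro hnt h0; exact hnt (h0 ▸ hβ)
    · intro h0 hT; exact h0 (tendsto_nhds_unique hβ hT)
  have E := edge_main eps heps u w d hnorm hα hβ
  refine ⟨fun h1 h2 => E.1 (hair.mp h1) ?_, fun h1 h2 => E.2.1 ?_ (hbir.mp h2),
    fun h1 h2 => E.2.2 (hair.mp h1) (hbir.mp h2)⟩
  · have hb1 : ¬ (b = 1) := by omega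
    exact not_not.mp fun hβne => hb1 (hbir.mpr hβne)
  · have ha1 : ¬ (a = 1) := by omega
    exact not_not.mp fun hαne => ha1 (hair.mpr hαne)

theorem rule_of_pentagons (n : ℕ) (hn : 5 ≤ n) (m : Fin n → ℂ)
    (hm : ∀ I : Finset (Fin n), I.Nonempty → ∑ k ∈ I, m k ≠ 0)
    (S : SingularSeq n m) (A B : Matrix (Fin n) (Fin n) ℕ)
    (hAB : IsZWMatrices S A B) :
    ∀ v : Fin 5 → Fin n, Function.Injective v →
      (∀ k : Fin 5, A (v k) (v (k + 1)) + B (v k) (v (k + 1)) ≠ 0) →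
      (univ.filter fun k : Fin 5 =>
          A (v k) (v (k + 1)) = 1 ∧ B (v k) (v (k + 1)) = 0).card ≠ 1 ∧
      (univ.filter fun k : Fin 5 =>
          A (v k) (v (k + 1)) = 0 ∧ B (v k) (v (k + 1)) = 1).card ≠ 1 ∧
      ¬ ((univ.filter fun k : Fin 5 =>
            A (v k) (v (k + 1)) = 1 ∧ B (v k) (v (k + 1)) = 0).card = 4 ∧
          (univ.filter fun k : Fin 5 =>
            A (v k) (v (k + 1)) = 0 ∧ B (v k) (v (k + 1)) = 1).card = 0 ∧
          (univ.filter fun k : Fin 5 =>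
            A (v k) (v (k + 1)) = 1 ∧ B (v k) (v (k + 1)) = 1).card = 1) ∧
      ¬ ((univ.filter fun k : Fin 5 =>
            A (v k) (v (k + 1)) = 1 ∧ B (v k) (v (k + 1)) = 0).card = 0 ∧
          (univ.filter fun k : Fin 5 =>
            A (v k) (v (k + 1)) = 0 ∧ B (v k) (v (k + 1)) = 1).card = 4 ∧
          (univ.filter fun k : Fin 5 =>
            A (v k) (v (k + 1)) = 1 ∧ B (v k) (v (k + 1)) = 1).card = 1) := by
  intro v hv hC
  have hij : ∀ k : Fin 5, v k ≠ v (k + 1) := by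
    intro k h
    have h2 := hv h
    have h3 : (0 : Fin 5) = 1 := by
      conv_lhs at h2 => rw [← add_zero k]
      exact add_left_cancel h2
    exact absurd h3 (by decide)
  have hnorm : ∀ (k : Fin 5) (N : ℕ), S.delta N (v k) (v (k + 1)) ^ 2 *
      (S.z N (v k) - S.z N (v (k + 1))) * (S.w N (v k) - S.w N (v (k + 1))) = 1 := by
    intro k N
    have h := S.normalize N (v k) (v (k + 1)) (hij k)
    linear_combination h
  have hnorm' : ∀ (k : Fin 5) (N : ℕ), S.delta N (v k) (v (k + 1)) ^ 2 *
      (S.w N (v k) - S.w N (v (k + 1))) * (S.z N (v k) - S.z N (v (k + 1))) = 1 := by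
    intro k N
    linear_combination hnorm k N
  have hz := fun k : Fin 5 => edge_facts S.eps S.eps_pos
    (fun N => S.z N (v k) - S.z N (v (k + 1))) (fun N => S.w N (v k) - S.w N (v (k + 1)))
    (fun N => S.delta N (v k) (v (k + 1))) (hnorm k)
    (A (v k) (v (k + 1))) (B (v k) (v (k + 1)))
    (by obtain ⟨L, hL⟩ := S.conv_Z (v k) (v (k + 1)) (hij k)
        exact ⟨L, by simpa [Zq] using hL⟩)
    (by obtain ⟨L, hL⟩ := S.conv_W (v k) (v (k + 1)) (hij k)
        exact ⟨L, by simpa [Zq] using hL⟩)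
    (by have := hAB.off_A (v k) (v (k + 1)) (hij k); simpa [Zq] using this)
    (by have := hAB.off_B (v k) (v (k + 1)) (hij k); simpa [Zq] using this)
  have hw := fun k : Fin 5 => edge_facts S.eps S.eps_pos
    (fun N => S.w N (v k) - S.w N (v (k + 1))) (fun N => S.z N (v k) - S.z N (v (k + 1)))
    (fun N => S.delta N (v k) (v (k + 1))) (hnorm' k)
    (B (v k) (v (k + 1))) (A (v k) (v (k + 1)))
    (by obtain ⟨L, hL⟩ := S.conv_W (v k) (v (k + 1)) (hij k)
        exact ⟨L, by simpa [Zq] using hL⟩)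
    (by obtain ⟨L, hL⟩ := S.conv_Z (v k) (v (k + 1)) (hij k)
        exact ⟨L, by simpa [Zq] using hL⟩)
    (by have := hAB.off_B (v k) (v (k + 1)) (hij k); simpa [Zq] using this)
    (by have := hAB.off_A (v k) (v (k + 1)) (hij k); simpa [Zq] using this)
  classical
  set cls : Fin 5 → Fin 3 := fun k => if A (v k) (v (k + 1)) = 1 then
      (if B (v k) (v (k + 1)) = 1 then 2 else 0) else 1 with hclsdef
  set cls' : Fin 5 → Fin 3 := fun k => if B (v k) (v (k + 1)) = 1 then
      (if A (v k) (v (k + 1)) = 1 then 2 else 0) else 1 with hclsdef'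
  have hAB01 : ∀ k : Fin 5, (A (v k) (v (k + 1)) = 0 ∨ A (v k) (v (k + 1)) = 1) ∧
      (B (v k) (v (k + 1)) = 0 ∨ B (v k) (v (k + 1)) = 1) :=
    fun k => ⟨hAB.zeroOne_A _ _, hAB.zeroOne_B _ _⟩
  have hcls0 : ∀ k, cls k = 0 ↔ (A (v k) (v (k + 1)) = 1 ∧ B (v k) (v (k + 1)) = 0) := by
    intro k
    obtain ⟨hA01, hB01⟩ := hAB01 k
    rcases hA01 with h | h <;> rcases hB01 with h' | h' <;> simp [hclsdef, h, h']
  have hcls1 : ∀ k, cls k = 1 ↔ (A (v k) (v (k + 1)) = 0 ∧ B (v k) (v (k + 1)) = 1) := by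
    intro k
    obtain ⟨hA01, hB01⟩ := hAB01 k
    have hc := hC k
    rcases hA01 with h | h <;> rcases hB01 with h' | h' <;> simp [hclsdef, h, h'] <;> omega
  have hcls2 : ∀ k, cls k = 2 ↔ (A (v k) (v (k + 1)) = 1 ∧ B (v k) (v (k + 1)) = 1) := by
    intro k
    obtain ⟨hA01, hB01⟩ := hAB01 k
    rcases hA01 with h | h <;> rcases hB01 with h' | h' <;> simp [hclsdef, h, h']
  have hcls0' : ∀ k, cls' k = 0 ↔ (A (v k) (v (k + 1)) = 0 ∧ B (v k) (v (k + 1)) = 1) := by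
    intro k
    obtain ⟨hA01, hB01⟩ := hAB01 k
    rcases hA01 with h | h <;> rcases hB01 with h' | h' <;> simp [hclsdef', h, h']
  have hcls1' : ∀ k, cls' k = 1 ↔ (A (v k) (v (k + 1)) = 1 ∧ B (v k) (v (k + 1)) = 0) := by
    intro k
    obtain ⟨hA01, hB01⟩ := hAB01 k
    have hc := hC k
    rcases hA01 with h | h <;> rcases hB01 with h' | h' <;> simp [hclsdef', h, h'] <;> omega
  have hcls2' : ∀ k, cls' k = 2 ↔ (A (v k) (v (k + 1)) = 1 ∧ B (v k) (v (k + 1)) = 1) := by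
    intro k
    obtain ⟨hA01, hB01⟩ := hAB01 k
    rcases hA01 with h | h <;> rcases hB01 with h' | h' <;> simp [hclsdef', h, h']
  have hsz : ∀ N, ∑ k : Fin 5, (S.z N (v k) - S.z N (v (k + 1))) / (S.eps N : ℂ) = 0 := by
    intro N
    rw [← Finset.sum_div, telescope5 (fun k => S.z N (v k)), zero_div]
  have hsw : ∀ N, ∑ k : Fin 5, (S.w N (v k) - S.w N (v (k + 1))) / (S.eps N : ℂ) = 0 := by
    intro N
    rw [← Finset.sum_div, telescope5 (fun k => S.w N (v k)), zero_div]
  have Hz := pentagon_aux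
    (fun k N => (S.z N (v k) - S.z N (v (k + 1))) / (S.eps N : ℂ)) hsz cls
    (fun k hk => ((hz k).1 ((hcls0 k).mp hk).1 ((hcls0 k).mp hk).2))
    (fun k hk => ((hz k).2.1 ((hcls1 k).mp hk).1 ((hcls1 k).mp hk).2))
    (fun k hk => ((hz k).2.2 ((hcls2 k).mp hk).1 ((hcls2 k).mp hk).2))
  have Hw := pentagon_aux
    (fun k N => (S.w N (v k) - S.w N (v (k + 1))) / (S.eps N : ℂ)) hsw cls'
    (fun k hk => ((hw k).1 ((hcls0' k).mp hk).2 ((hcls0' k).mp hk).1))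
    (fun k hk => ((hw k).2.1 ((hcls1' k).mp hk).2 ((hcls1' k).mp hk).1))
    (fun k hk => ((hw k).2.2 ((hcls2' k).mp hk).2 ((hcls2' k).mp hk).1))
  have e10 : (univ.filter fun k : Fin 5 =>
      A (v k) (v (k + 1)) = 1 ∧ B (v k) (v (k + 1)) = 0) = univ.filter fun k => cls k = 0 :=
    Finset.filter_congr fun k _ => (hcls0 k).symm
  have e01 : (univ.filter fun k : Fin 5 =>
      A (v k) (v (k + 1)) = 0 ∧ B (v k) (v (k + 1)) = 1) = univ.filter fun k => cls' k = 0 :=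
    Finset.filter_congr fun k _ => (hcls0' k).symm
  have e11 : (univ.filter fun k : Fin 5 =>
      A (v k) (v (k + 1)) = 1 ∧ B (v k) (v (k + 1)) = 1) = univ.filter fun k => cls k = 2 :=
    Finset.filter_congr fun k _ => (hcls2 k).symm
  have e11' : (univ.filter fun k : Fin 5 =>
      A (v k) (v (k + 1)) = 1 ∧ B (v k) (v (k + 1)) = 1) = univ.filter fun k => cls' k = 2 :=
    Finset.filter_congr fun k _ => (hcls2' k).symm
  refine ⟨?_, ?_, ?_, ?_⟩
  · rw [e10]; exact Hz.1
  · rw [e01]; exact Hw.1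
  · rintro ⟨_, h0, h1⟩
    exact Hw.2 ⟨by rw [← e01]; exact h0, by rw [← e11']; exact h1⟩
  · rintro ⟨h0, _, h1⟩
    exact Hz.2 ⟨by rw [← e10]; exact h0, by rw [← e11]; exact h1⟩
end

section
/- (Rule of Fully Connected Companions) Let A and B be the z-matrix and w-matrix of a singular sequence. If A is fully connected, then the trace of B equals 0; likewise, if B is fully connected, then the trace of A equals 0. -/
open Filter Finset

/-- The stroke graph of a matrix: an edge between `i` and `j` (`i ≠ j`) iff the
corresponding entry equals `1` (the matrices in question are symmetric). -/
def strokeGraph {n : ℕ} (A : Matrix (Fin n) (Fin n) ℕ) : SimpleGraph (Fin n) where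
  Adj i j := i ≠ j ∧ A i j = 1 ∧ A j i = 1
  symm := ⟨fun _ _ h => ⟨h.1.symm, h.2.2, h.2.1⟩⟩
  loopless := ⟨fun _ h => h.1 rfl⟩

/-- `I` is (the vertex set of) a connected component of the stroke graph of `A`. -/
def IsComponent {n : ℕ} (A : Matrix (Fin n) (Fin n) ℕ) (I : Finset (Fin n)) : Prop :=
  ∃ v : Fin n, ∀ u : Fin n, u ∈ I ↔ (strokeGraph A).Reachable u v

/-- swap z and w -/
noncomputable def SingularSeq.swap {n : ℕ} {m : Fin n → ℂ} (S : SingularSeq n m) :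
    SingularSeq n m where
  z := S.w
  w := S.z
  delta := S.delta
  eps := S.eps
  eps_pos := S.eps_pos
  eps_lim := S.eps_lim
  delta_symm := S.delta_symm
  eq_z := S.eq_w
  eq_w := S.eq_z
  normalize := fun N k l h => by linear_combination S.normalize N k l h
  maxZ := S.maxW
  maxW := S.maxZ
  conv_z := S.conv_w
  conv_w := S.conv_z
  conv_Z := S.conv_W
  conv_W := S.conv_Z

lemma IsZWMatrices.swap {n : ℕ} {m : Fin n → ℂ} {S : SingularSeq n m}
    {A B : Matrix (Fin n) (Fin n) ℕ} (h : IsZWMatrices S A B) :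
    IsZWMatrices S.swap B A where
  zeroOne_A := h.zeroOne_B
  symm_A := h.symm_B
  zeroOne_B := h.zeroOne_A
  symm_B := h.symm_A
  diag_A := h.diag_B
  off_A := h.off_B
  diag_B := h.diag_A
  off_B := h.off_A

lemma sum_mw_zero {n : ℕ} {m : Fin n → ℂ} (S : SingularSeq n m) (N : ℕ) :
    ∑ k, m k * S.w N k = 0 := by
  set F : Fin n → Fin n → ℂ := fun k l => m k * (m l * Zq (S.delta N) (S.w N) k l) with hF
  have hstep : ∑ k, m k * S.w N k = ∑ k, ∑ l, F k l := by
    refine Finset.sum_congr rfl fun k _ => ?_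
    rw [S.eq_w N k, Finset.mul_sum]
    exact Finset.sum_erase univ (show m k * (m k * Zq (S.delta N) (S.w N) k k) = 0 by simp [Zq])
  have hanti : ∀ k l, F k l = -F l k := by
    intro k l
    simp only [hF, Zq]
    rw [S.delta_symm N l k]
    ring
  have hT : ∑ k, ∑ l, F k l = -∑ k, ∑ l, F k l := by
    conv_lhs => rw [Finset.sum_comm]
    rw [← Finset.sum_neg_distrib]
    refine Finset.sum_congr rfl fun l _ => ?_
    rw [← Finset.sum_neg_distrib]
    exact Finset.sum_congr rfl fun k _ => hanti k l
  rw [hstep]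
  linear_combination (1/2 : ℂ) * hT

lemma edge_tendsto {n : ℕ} {m : Fin n → ℂ} (S : SingularSeq n m) {k l : Fin n} (hkl : k ≠ l)
    (hA : ¬ Tendsto (fun N => (S.eps N : ℂ) ^ 2 * Zq (S.delta N) (S.z N) k l) atTop (nhds 0)) :
    Tendsto (fun N => (S.eps N : ℂ) ^ 2 * (S.w N k - S.w N l)) atTop (nhds 0) := by
  obtain ⟨a, ha⟩ := S.conv_Z k l hkl
  have ha0 : a ≠ 0 := by rintro rfl; exact hA ha
  -- |eps * delta| ≤ 1
  have hbound : ∀ N, S.eps N * ‖S.delta N k l‖ ≤ 1 := by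
    intro N
    have he := S.eps_pos N
    have hE : S.eps N ^ (-2 : ℤ) = (S.eps N ^ 2)⁻¹ := by
      rw [zpow_neg]; norm_cast
    have hZ : ‖Zq (S.delta N) (S.z N) k l‖ ≤ (S.eps N ^ 2)⁻¹ := by
      rw [← hE]; exact (S.maxZ N).2 (Or.inr ⟨k, l, hkl, rfl⟩)
    have hW : ‖Zq (S.delta N) (S.w N) k l‖ ≤ (S.eps N ^ 2)⁻¹ := by
      rw [← hE]; exact (S.maxW N).2 (Or.inr ⟨k, l, hkl, rfl⟩)
    have hnorm := S.normalize N k l hkl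
    have h4 : Zq (S.delta N) (S.z N) k l * Zq (S.delta N) (S.w N) k l = S.delta N k l ^ 4 := by
      simp only [Zq]; linear_combination (S.delta N k l ^ 4) * hnorm
    have habs : ‖S.delta N k l‖ ^ 4 ≤ (S.eps N ^ 2)⁻¹ * (S.eps N ^ 2)⁻¹ := by
      calc ‖S.delta N k l‖ ^ 4
          = ‖Zq (S.delta N) (S.z N) k l‖ * ‖Zq (S.delta N) (S.w N) k l‖ := by
            rw [← norm_mul, h4, norm_pow]
        _ ≤ (S.eps N ^ 2)⁻¹ * (S.eps N ^ 2)⁻¹ :=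
            mul_le_mul hZ hW (norm_nonneg _) (by positivity)
    have hpow : (S.eps N * ‖S.delta N k l‖) ^ 4 ≤ 1 := by
      have h1 : S.eps N ^ 4 * ((S.eps N ^ 2)⁻¹ * (S.eps N ^ 2)⁻¹) = 1 := by
        field_simp
      calc (S.eps N * ‖S.delta N k l‖) ^ 4
          = S.eps N ^ 4 * ‖S.delta N k l‖ ^ 4 := by ring
        _ ≤ S.eps N ^ 4 * ((S.eps N ^ 2)⁻¹ * (S.eps N ^ 2)⁻¹) := by
            exact mul_le_mul_of_nonneg_left habs (by positivity)
        _ = 1 := h1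
    exact (pow_le_one_iff_of_nonneg (by positivity) (by norm_num)).mp hpow
  -- rewrite the sequence
  have hrw : ∀ N, (S.eps N : ℂ) ^ 2 * (S.w N k - S.w N l) =
      ((S.eps N : ℂ) ^ 3 * ((S.eps N : ℂ) * S.delta N k l)) /
        ((S.eps N : ℂ) ^ 2 * Zq (S.delta N) (S.z N) k l) := by
    intro N
    have hnorm := S.normalize N k l hkl
    have hδ : S.delta N k l ≠ 0 := by
      rintro h; rw [h] at hnorm; simp at hnorm
    have hz : S.z N l - S.z N k ≠ 0 := by
      rintro h; rw [h] at hnorm; simp at hnorm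
    have hε : (S.eps N : ℂ) ≠ 0 := by
      exact_mod_cast (S.eps_pos N).ne'
    have hz' : S.z N k - S.z N l ≠ 0 := fun h => hz (by linear_combination -h)
    simp only [Zq]
    rw [eq_div_iff (mul_ne_zero (pow_ne_zero 2 hε) (mul_ne_zero (pow_ne_zero 3 hδ) hz'))]
    linear_combination ((S.eps N : ℂ) ^ 4 * S.delta N k l) * hnorm
  have hnum : Tendsto (fun N => (S.eps N : ℂ) ^ 3 * ((S.eps N : ℂ) * S.delta N k l))
      atTop (nhds 0) := by
    apply squeeze_zero_norm (a := fun N => S.eps N ^ 3)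
    · intro N
      have he := (S.eps_pos N).le
      calc ‖(S.eps N : ℂ) ^ 3 * ((S.eps N : ℂ) * S.delta N k l)‖
          = S.eps N ^ 3 * (S.eps N * ‖S.delta N k l‖) := by
            rw [norm_mul, norm_pow, norm_mul, Complex.norm_real, Real.norm_eq_abs,
              abs_of_nonneg he]
        _ ≤ S.eps N ^ 3 * 1 := by
            exact mul_le_mul_of_nonneg_left (hbound N) (by positivity)
        _ = S.eps N ^ 3 := mul_one _
    · simpa using S.eps_lim.pow 3
  have hdiv := hnum.div ha ha0
  rw [zero_div] at hdiv
  exact hdiv.congr fun N => (hrw N).symm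

lemma trace_eq_zero {n : ℕ} (hn : 2 ≤ n) {m : Fin n → ℂ}
    (hm : ∀ I : Finset (Fin n), I.Nonempty → ∑ k ∈ I, m k ≠ 0)
    (S : SingularSeq n m) (A B : Matrix (Fin n) (Fin n) ℕ)
    (hAB : IsZWMatrices S A B) (hconn : (strokeGraph A).Connected) :
    Matrix.trace B = 0 := by
  choose L hL using S.conv_w
  have hdiff : ∀ u v : Fin n, (strokeGraph A).Reachable u v →
      Tendsto (fun N => (S.eps N : ℂ) ^ 2 * (S.w N u - S.w N v)) atTop (nhds 0) := by
    intro u v h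
    obtain ⟨p⟩ := h
    induction p with
    | nil => simp only [sub_self, mul_zero]; exact tendsto_const_nhds
    | cons h p ih =>
      have h1 := edge_tendsto S h.1 ((hAB.off_A _ _ h.1).mp h.2.1)
      have h2 := h1.add ih
      rw [add_zero] at h2
      exact h2.congr fun N => by ring
  have hLeq : ∀ u v : Fin n, L u = L v := by
    intro u v
    have h2 := (hdiff u v (hconn.preconnected u v)).add (hL v)
    rw [zero_add] at h2
    exact tendsto_nhds_unique (hL u) (h2.congr fun N => by ring)
  have hsum : ∑ k, m k * L k = 0 := by
    have h1 : Tendsto (fun N => ∑ k, m k * ((S.eps N : ℂ) ^ 2 * S.w N k)) atTop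
        (nhds (∑ k, m k * L k)) :=
      tendsto_finset_sum _ fun k _ => (hL k).const_mul (m k)
    have h2 : ∀ N, ∑ k, m k * ((S.eps N : ℂ) ^ 2 * S.w N k) = 0 := by
      intro N
      calc ∑ k, m k * ((S.eps N : ℂ) ^ 2 * S.w N k)
          = (S.eps N : ℂ) ^ 2 * ∑ k, m k * S.w N k := by
            rw [Finset.mul_sum]; exact Finset.sum_congr rfl fun k _ => by ring
        _ = 0 := by rw [sum_mw_zero S N, mul_zero]
    have h4 : Tendsto (fun N => ∑ k, m k * ((S.eps N : ℂ) ^ 2 * S.w N k)) atTop (nhds 0) :=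
      tendsto_const_nhds.congr fun N => (h2 N).symm
    exact tendsto_nhds_unique h1 h4
  have hv0 : ∀ k, L k = 0 := by
    have v0 : Fin n := ⟨0, by omega⟩
    have hL0 : L v0 = 0 := by
      have hh : ∑ k, m k * L k = (∑ k, m k) * L v0 := by
        rw [Finset.sum_mul]; exact Finset.sum_congr rfl fun k _ => by rw [hLeq k v0]
      rw [hh] at hsum
      rcases mul_eq_zero.mp hsum with h | h
      · exact absurd h (hm univ ⟨v0, Finset.mem_univ v0⟩)
      · exact h
    exact fun k => (hLeq k v0).trans hL0
  have hdiag : ∀ k, B k k = 0 := by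
    intro k
    have ht : Tendsto (fun N => (S.eps N : ℂ) ^ 2 * S.w N k) atTop (nhds 0) :=
      (hv0 k) ▸ hL k
    rcases hAB.zeroOne_B k k with h | h
    · exact h
    · exact absurd ht ((hAB.diag_B k).mp h)
  simp [Matrix.trace, Matrix.diag, hdiag]

theorem rule_of_fully_connected_companions (n : ℕ) (hn : 2 ≤ n) (m : Fin n → ℂ)
    (hm : ∀ I : Finset (Fin n), I.Nonempty → ∑ k ∈ I, m k ≠ 0)
    (S : SingularSeq n m) (A B : Matrix (Fin n) (Fin n) ℕ)
    (hAB : IsZWMatrices S A B) :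
    ((strokeGraph A).Connected → Matrix.trace B = 0) ∧
    ((strokeGraph B).Connected → Matrix.trace A = 0) := by
  exact ⟨fun h => trace_eq_zero hn hm S A B hAB h,
         fun h => trace_eq_zero hn hm S.swap B A hAB.swap h⟩
end

section
/- (Rule of Trace-0 Principal Minors) Let A and B be the z-matrix and w-matrix of a singular sequence, and let I ⊆ {1,…,n}. If a_{ii} = 0 for all i ∈ I, then Σ_{i∈I, j∉I} a_{ij} ≠ 1. The same statement holds with A replaced by B. -/
open Filter Finset

open Filter Finset in
private lemma key_lemma {n : ℕ} (m : Fin n → ℂ)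
    (hm : ∀ k : Fin n, m k ≠ 0)
    (z : ℕ → Fin n → ℂ) (delta : ℕ → Fin n → Fin n → ℂ) (eps : ℕ → ℝ)
    (hsymm : ∀ N, ∀ k l : Fin n, delta N k l = delta N l k)
    (heq : ∀ N, ∀ k : Fin n, z N k = ∑ l ∈ univ.erase k, m l * Zq (delta N) (z N) k l)
    (hconvZ : ∀ k l : Fin n, k ≠ l → ∃ L : ℂ,
      Tendsto (fun N => (eps N : ℂ) ^ 2 * Zq (delta N) (z N) k l) atTop (nhds L))
    (A : Matrix (Fin n) (Fin n) ℕ)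
    (h01 : ∀ i j, A i j = 0 ∨ A i j = 1)
    (hdiag : ∀ i, A i i = 1 ↔
      ¬ Tendsto (fun N => (eps N : ℂ) ^ 2 * z N i) atTop (nhds 0))
    (hoff : ∀ i j, i ≠ j → (A i j = 1 ↔
      ¬ Tendsto (fun N => (eps N : ℂ) ^ 2 * Zq (delta N) (z N) i j) atTop (nhds 0)))
    (I : Finset (Fin n)) (hdI : ∀ i ∈ I, A i i = 0) :
    (∑ i ∈ I, ∑ j ∈ Iᶜ, A i j) ≠ 1 := by
  intro hsum
  classical
  have hsum' : ∑ p ∈ I ×ˢ Iᶜ, A p.1 p.2 = 1 := by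
    rw [Finset.sum_product]; exact hsum
  obtain ⟨p0, hp0s, hp0⟩ : ∃ p0 ∈ I ×ˢ Iᶜ, A p0.1 p0.2 ≠ 0 :=
    Finset.exists_ne_zero_of_sum_ne_zero (by rw [hsum']; norm_num)
  have hA1 : A p0.1 p0.2 = 1 := (h01 _ _).resolve_left hp0
  have hp0I : p0.1 ∈ I ∧ p0.2 ∈ Iᶜ := Finset.mem_product.mp hp0s
  have hp0ne : p0.1 ≠ p0.2 := by
    intro h
    exact (Finset.mem_compl.mp hp0I.2) (h ▸ hp0I.1)
  have hrest0 : ∀ p ∈ (I ×ˢ Iᶜ).erase p0, A p.1 p.2 = 0 := by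
    have h : A p0.1 p0.2 + ∑ p ∈ (I ×ˢ Iᶜ).erase p0, A p.1 p.2 = ∑ p ∈ I ×ˢ Iᶜ, A p.1 p.2 :=
      Finset.add_sum_erase (I ×ˢ Iᶜ) (fun p => A p.1 p.2) hp0s
    have hz : ∑ p ∈ (I ×ˢ Iᶜ).erase p0, A p.1 p.2 = 0 := by omega
    intro p hp
    exact (Finset.sum_eq_zero_iff).mp hz p hp
  -- antisymmetry of Zq
  have hZanti : ∀ N, ∀ k l : Fin n,
      Zq (delta N) (z N) k l = - Zq (delta N) (z N) l k := by
    intro N k l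
    simp only [Zq]
    rw [hsymm N k l]; ring
  -- the limit L of the distinguished term
  obtain ⟨L, hL⟩ := hconvZ p0.1 p0.2 hp0ne
  -- Claim A : the double sum tends to m p0.1 * m p0.2 * L
  have hFa : Tendsto (fun N => ∑ p ∈ I ×ˢ Iᶜ,
      m p.1 * m p.2 * ((eps N : ℂ) ^ 2 * Zq (delta N) (z N) p.1 p.2))
      atTop (nhds (m p0.1 * m p0.2 * L)) := by
    have hFsplit : ∀ N, (∑ p ∈ I ×ˢ Iᶜ,
        m p.1 * m p.2 * ((eps N : ℂ) ^ 2 * Zq (delta N) (z N) p.1 p.2)) =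
        m p0.1 * m p0.2 * ((eps N : ℂ) ^ 2 * Zq (delta N) (z N) p0.1 p0.2)
          + ∑ p ∈ (I ×ˢ Iᶜ).erase p0,
            m p.1 * m p.2 * ((eps N : ℂ) ^ 2 * Zq (delta N) (z N) p.1 p.2) := by
      intro N
      exact (Finset.add_sum_erase (I ×ˢ Iᶜ) _ hp0s).symm
    have h1 : Tendsto (fun N =>
        m p0.1 * m p0.2 * ((eps N : ℂ) ^ 2 * Zq (delta N) (z N) p0.1 p0.2))
        atTop (nhds (m p0.1 * m p0.2 * L)) := hL.const_mul _
    have h2 : Tendsto (fun N => ∑ p ∈ (I ×ˢ Iᶜ).erase p0,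
        m p.1 * m p.2 * ((eps N : ℂ) ^ 2 * Zq (delta N) (z N) p.1 p.2))
        atTop (nhds 0) := by
      have key : Tendsto (fun N => ∑ p ∈ (I ×ˢ Iᶜ).erase p0,
          m p.1 * m p.2 * ((eps N : ℂ) ^ 2 * Zq (delta N) (z N) p.1 p.2))
          atTop (nhds (∑ p ∈ (I ×ˢ Iᶜ).erase p0, (0 : ℂ))) := by
        apply tendsto_finset_sum
        intro p hp
        have hpmem := Finset.mem_product.mp (Finset.mem_of_mem_erase hp)
        have hpne : p.1 ≠ p.2 := by
          intro h
          exact (Finset.mem_compl.mp hpmem.2) (h ▸ hpmem.1)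
        have hA0 : A p.1 p.2 = 0 := hrest0 p hp
        have ht : Tendsto (fun N => (eps N : ℂ) ^ 2 * Zq (delta N) (z N) p.1 p.2)
            atTop (nhds 0) := by
          by_contra hcon
          have := (hoff p.1 p.2 hpne).mpr hcon
          omega
        simpa using ht.const_mul (m p.1 * m p.2)
      simpa using key
    have h3 := h1.add h2
    simp only [add_zero] at h3
    exact h3.congr (fun N => (hFsplit N).symm)
  -- Claim B : the double sum tends to 0
  have hFb : Tendsto (fun N => ∑ p ∈ I ×ˢ Iᶜ,
      m p.1 * m p.2 * ((eps N : ℂ) ^ 2 * Zq (delta N) (z N) p.1 p.2))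
      atTop (nhds 0) := by
    have hFeq : ∀ N, (∑ p ∈ I ×ˢ Iᶜ,
        m p.1 * m p.2 * ((eps N : ℂ) ^ 2 * Zq (delta N) (z N) p.1 p.2)) =
        ∑ k ∈ I, m k * ((eps N : ℂ) ^ 2 * z N k) := by
      intro N
      rw [Finset.sum_product]
      have hinner : ∀ k ∈ I, m k * ((eps N : ℂ) ^ 2 * z N k) =
          (∑ l ∈ I.erase k, m k * m l * ((eps N : ℂ) ^ 2 * Zq (delta N) (z N) k l))
          + ∑ l ∈ Iᶜ, m k * m l * ((eps N : ℂ) ^ 2 * Zq (delta N) (z N) k l) := by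
        intro k hk
        have hset : (univ.erase k : Finset (Fin n)) = (I.erase k) ∪ Iᶜ := by
          ext l
          simp only [Finset.mem_erase, Finset.mem_union, Finset.mem_univ,
            Finset.mem_compl, and_true]
          constructor
          · intro hl
            by_cases h : l ∈ I
            · exact Or.inl ⟨hl, h⟩
            · exact Or.inr h
          · rintro (⟨h1, _⟩ | h)
            · exact h1
            · intro hkl; exact h (hkl ▸ hk)
        have hdisj : Disjoint (I.erase k) Iᶜ :=
          Disjoint.mono_left (Finset.erase_subset k I) disjoint_compl_right
        rw [heq N k, hset, Finset.sum_union hdisj]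
        simp only [mul_add, Finset.mul_sum]
        congr 1 <;> · apply Finset.sum_congr rfl; intro l _; ring
      rw [Finset.sum_congr rfl hinner, Finset.sum_add_distrib]
      have hanti : ∑ k ∈ I, ∑ l ∈ I.erase k,
          m k * m l * ((eps N : ℂ) ^ 2 * Zq (delta N) (z N) k l) = 0 := by
        set g : Fin n → Fin n → ℂ := fun k l =>
          m k * m l * ((eps N : ℂ) ^ 2 * Zq (delta N) (z N) k l) with hg
        have hganti : ∀ k l, g k l = - g l k := by
          intro k l
          simp only [hg]
          rw [hZanti N k l]; ring
        have h1 : ∀ k ∈ I, ∑ l ∈ I.erase k, g k l = ∑ l ∈ I, g k l := by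
          intro k hk
          have hgkk : g k k = 0 := by
            have h2 : g k k + g k k = 0 := by linear_combination hganti k k
            exact add_self_eq_zero.mp h2
          rw [← Finset.add_sum_erase I (g k) hk, hgkk, zero_add]
        rw [Finset.sum_congr rfl h1]
        have hC : ∑ k ∈ I, ∑ l ∈ I, g k l = - ∑ k ∈ I, ∑ l ∈ I, g k l := by
          nth_rewrite 1 [Finset.sum_comm]
          rw [← Finset.sum_neg_distrib]
          apply Finset.sum_congr rfl
          intro k _
          rw [← Finset.sum_neg_distrib]
          apply Finset.sum_congr rfl
          intro l _
          exact hganti l k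
        have h2 : (∑ k ∈ I, ∑ l ∈ I, g k l) + ∑ k ∈ I, ∑ l ∈ I, g k l = 0 := by
          linear_combination hC
        exact add_self_eq_zero.mp h2
      rw [hanti, zero_add]
    have key : Tendsto (fun N => ∑ k ∈ I, m k * ((eps N : ℂ) ^ 2 * z N k))
        atTop (nhds (∑ k ∈ I, (0 : ℂ))) := by
      apply tendsto_finset_sum
      intro k hk
      have hA0 : A k k = 0 := hdI k hk
      have ht : Tendsto (fun N => (eps N : ℂ) ^ 2 * z N k) atTop (nhds 0) := by
        by_contra hcon
        have := (hdiag k).mpr hcon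
        omega
      simpa using ht.const_mul (m k)
    simp only [Finset.sum_const_zero] at key
    exact key.congr (fun N => (hFeq N).symm)
  -- conclude
  have hzero : m p0.1 * m p0.2 * L = 0 := tendsto_nhds_unique hFa hFb
  have hLne : L ≠ 0 := by
    intro h
    rw [h] at hL
    exact ((hoff p0.1 p0.2 hp0ne).mp hA1) hL
  exact (mul_ne_zero (mul_ne_zero (hm p0.1) (hm p0.2)) hLne) hzero

theorem rule_of_trace_zero_principal_minors (n : ℕ) (hn : 2 ≤ n) (m : Fin n → ℂ)
    (hm : ∀ I : Finset (Fin n), I.Nonempty → ∑ k ∈ I, m k ≠ 0)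
    (S : SingularSeq n m) (A B : Matrix (Fin n) (Fin n) ℕ)
    (hAB : IsZWMatrices S A B) :
    ∀ I : Finset (Fin n),
      ((∀ i ∈ I, A i i = 0) → (∑ i ∈ I, ∑ j ∈ Iᶜ, A i j) ≠ 1) ∧
      ((∀ i ∈ I, B i i = 0) → (∑ i ∈ I, ∑ j ∈ Iᶜ, B i j) ≠ 1)  := by
  have hm' : ∀ k : Fin n, m k ≠ 0 := by
    intro k
    have := hm {k} (Finset.singleton_nonempty k)
    simpa using this
  intro I
  constructor
  · exact key_lemma m hm' S.z S.delta S.eps S.delta_symm S.eq_z S.conv_Z A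
      hAB.zeroOne_A hAB.diag_A hAB.off_A I
  · exact key_lemma m hm' S.w S.delta S.eps S.delta_symm S.eq_w S.conv_W B
      hAB.zeroOne_B hAB.diag_B hAB.off_B I
end

section
/- Let A and B be the z-matrix and w-matrix of a singular sequence, let i ≠ j be indices in {1,…,n}, and suppose the (nonzero) complex sequence z_{ij} = z_i − z_j has level k and the (nonzero) complex sequence w_{ij} = w_i − w_j has level l, for some k, l ∈ {0,1,2,3,4,5}. If a_{ij} + b_{ij} ≥ 1 (i.e., there is an edge between bodies i and j), then k + l = 6. If a_{ij} + b_{ij} = 0 (no edge between i and j), then k + l ≥ 6. -/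
open Filter Finset

/-- `a ≺ b`: the ratio `a/b` tends to `0`. -/
def Prec (a b : ℕ → ℂ) : Prop :=
  Tendsto (fun N => a N / b N) atTop (nhds 0)

/-- The ratio `a/b` is bounded. -/
def BddRatio (a b : ℕ → ℂ) : Prop :=
  ∃ C : ℝ, ∀ N, ‖a N / b N‖ ≤ C

/-- `a ≈ b`: both `a/b` and `b/a` are bounded. -/
def Approx (a b : ℕ → ℂ) : Prop := BddRatio a b ∧ BddRatio b a

/-- The sequence `N ↦ (ε N)^k`, viewed in `ℂ`. -/
noncomputable def epow (eps : ℕ → ℝ) (k : ℤ) : ℕ → ℂ := fun N => (eps N : ℂ) ^ k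

/-- The sequence `a` has order in level `k` with respect to `ε`:
level 0 means `a ≺ ε^2`, level 1 means `a ≈ ε^2`, level 2 means
`ε^2 ≺ a ≺ ε`, level 3 means `a ≈ ε`, level 4 means `ε ≺ a ≺ ε^{-2}`,
and level 5 means `a ≈ ε^{-2}`. -/
def HasLevel (eps : ℕ → ℝ) (a : ℕ → ℂ) : ℕ → Prop
  | 0 => Prec a (epow eps 2)
  | 1 => Approx a (epow eps 2)
  | 2 => Prec (epow eps 2) a ∧ Prec a (epow eps 1)
  | 3 => Approx a (epow eps 1)
  | 4 => Prec (epow eps 1) a ∧ Prec a (epow eps (-2))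
  | 5 => Approx a (epow eps (-2))
  | _ => False

namespace LevelAux
open Asymptotics Filter

/-- Exponent of the upper bound `ε^(u k)` for a sequence of level `k`. -/
def u (k : ℕ) : ℤ := if k ≤ 1 then 2 else if k ≤ 3 then 1 else -2

variable {eps : ℕ → ℝ}

lemma epsC_ne (he : ∀ N, 0 < eps N) (N : ℕ) : (eps N : ℂ) ≠ 0 := by
  exact_mod_cast (he N).ne'

lemma epow_ne (he : ∀ N, 0 < eps N) (r : ℤ) (N : ℕ) : epow eps r N ≠ 0 :=
  zpow_ne_zero r (epsC_ne he N)

lemma epow_add (he : ∀ N, 0 < eps N) (p q : ℤ) (N : ℕ) :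
    epow eps (p + q) N = epow eps p N * epow eps q N :=
  zpow_add₀ (epsC_ne he N) p q

lemma epow3 (he : ∀ N, 0 < eps N) (p q : ℤ) :
    epow eps (3*p + q) = fun N => epow eps p N * (epow eps p N * (epow eps p N * epow eps q N)) := by
  funext N
  rw [show 3*p + q = p + (p + (p + q)) by ring, epow_add he, epow_add he, epow_add he]

lemma tendsto_epsC (hl : Filter.Tendsto eps Filter.atTop (nhds 0)) :
    Filter.Tendsto (fun N => (eps N : ℂ)) Filter.atTop (nhds 0) := by
  have := (Complex.continuous_ofReal.tendsto 0).comp hl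
  simpa [Function.comp_def] using this

lemma epow_lo (he : ∀ N, 0 < eps N) (hl : Filter.Tendsto eps Filter.atTop (nhds 0))
    {p q : ℤ} (h : p < q) : epow eps q =o[Filter.atTop] epow eps p := by
  rw [isLittleO_iff_tendsto (fun N h0 => absurd h0 (epow_ne he p N))]
  have heq : (fun N => epow eps q N / epow eps p N)
      = fun N => (eps N : ℂ) ^ ((q - p).toNat) := by
    funext N
    rw [epow, epow, ← zpow_sub₀ (epsC_ne he N), ← zpow_natCast ((eps N : ℂ)) ((q-p).toNat),
      Int.toNat_of_nonneg (by omega)]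
  rw [heq]
  have := (tendsto_epsC hl).pow ((q - p).toNat)
  rwa [zero_pow (by omega)] at this

lemma epow_O (he : ∀ N, 0 < eps N) (hl : Filter.Tendsto eps Filter.atTop (nhds 0))
    {p q : ℤ} (h : p ≤ q) : epow eps q =O[Filter.atTop] epow eps p := by
  rcases eq_or_lt_of_le h with rfl | h
  · exact isBigO_refl _ _
  · exact (epow_lo he hl h).isBigO

lemma prec_lo {a b : ℕ → ℂ} (hb : ∀ N, b N ≠ 0) (h : Prec a b) :
    a =o[Filter.atTop] b :=
  (isLittleO_iff_tendsto (fun N h0 => absurd h0 (hb N))).2 h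

lemma bdd_O {a b : ℕ → ℂ} (hb : ∀ N, b N ≠ 0) (h : BddRatio a b) :
    a =O[Filter.atTop] b := by
  obtain ⟨C, hC⟩ := h
  rw [isBigO_iff]
  refine ⟨C, Filter.Eventually.of_forall fun N => ?_⟩
  have h1 := hC N
  rw [norm_div] at h1
  have hb' : 0 < ‖b N‖ := norm_pos_iff.2 (hb N)
  exact (div_le_iff₀ hb').1 h1

lemma no_both (he : ∀ N, 0 < eps N) {f : ℕ → ℂ}
    (h1 : epow eps 4 =o[Filter.atTop] f) (h2 : f =O[Filter.atTop] epow eps 4) : False :=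
  isLittleO_irrefl (Filter.Frequently.of_forall fun N => epow_ne he 4 N)
    (h1.trans_isBigO h2)

lemma no_both' (he : ∀ N, 0 < eps N) {f : ℕ → ℂ}
    (h1 : f =o[Filter.atTop] epow eps 4) (h2 : epow eps 4 =O[Filter.atTop] f) : False :=
  isLittleO_irrefl (Filter.Frequently.of_forall fun N => epow_ne he 4 N)
    (h2.trans_isLittleO h1)

lemma cube_mul_lo (he : ∀ N, 0 < eps N) (hlim : Filter.Tendsto eps Filter.atTop (nhds 0))
    {z w : ℕ → ℂ} {p q : ℤ}
    (hz : z =O[Filter.atTop] epow eps p) (hw : w =O[Filter.atTop] epow eps q)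
    (h : 4 < 3*p + q ∨ (3*p + q = 4 ∧ (z =o[Filter.atTop] epow eps p ∨ w =o[Filter.atTop] epow eps q))) :
    (fun N => z N ^ 3 * w N) =o[Filter.atTop] epow eps 4 := by
  have hfun : (fun N => z N ^ 3 * w N) = fun N => z N * (z N * (z N * w N)) := by
    funext N; ring
  rw [hfun]
  rcases h with h | ⟨h4, hs⟩
  · have hbase := hz.mul (hz.mul (hz.mul hw))
    rw [← epow3 he p q] at hbase
    exact hbase.trans_isLittleO (epow_lo he hlim h)
  · rw [show (4:ℤ) = 3*p + q from h4.symm]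
    rcases hs with hs | hs
    · have := hs.mul_isBigO (hz.mul (hz.mul hw))
      rwa [← epow3 he p q] at this
    · have := hz.mul_isLittleO (hz.mul_isLittleO (hz.mul_isLittleO hs))
      rwa [← epow3 he p q] at this

lemma lo_cube_mul (he : ∀ N, 0 < eps N) (hlim : Filter.Tendsto eps Filter.atTop (nhds 0))
    {z w : ℕ → ℂ} {p q : ℤ}
    (hz : epow eps p =O[Filter.atTop] z) (hw : epow eps q =O[Filter.atTop] w)
    (h : 3*p + q < 4 ∨ (3*p + q = 4 ∧ (epow eps p =o[Filter.atTop] z ∨ epow eps q =o[Filter.atTop] w))) :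
    epow eps 4 =o[Filter.atTop] (fun N => z N ^ 3 * w N) := by
  have hfun : (fun N => z N ^ 3 * w N) = fun N => z N * (z N * (z N * w N)) := by
    funext N; ring
  rw [hfun]
  rcases h with h | ⟨h4, hs⟩
  · have hbase := hz.mul (hz.mul (hz.mul hw))
    rw [← epow3 he p q] at hbase
    exact (epow_lo he hlim h).trans_isBigO hbase
  · rw [show (4:ℤ) = 3*p + q from h4.symm]
    rcases hs with hs | hs
    · have := hs.mul_isBigO (hz.mul (hz.mul hw))
      rwa [← epow3 he p q] at this
    · have := hz.mul_isLittleO (hz.mul_isLittleO (hz.mul_isLittleO hs))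
      rwa [← epow3 he p q] at this

end LevelAux

namespace LevelAux
open Asymptotics Filter

variable {eps : ℕ → ℝ}

lemma level_ub {z : ℕ → ℂ} {k : ℕ} (he : ∀ N, 0 < eps N) (hk : k ≤ 5)
    (h : HasLevel eps z k) :
    z =O[atTop] epow eps (u k) ∧ (k % 2 = 0 → z =o[atTop] epow eps (u k)) := by
  interval_cases k
  · have h' : Prec z (epow eps 2) := h
    have := prec_lo (epow_ne he 2) h'
    exact ⟨this.isBigO, fun _ => by simpa [u] using this⟩
  · have h' : Approx z (epow eps 2) := h
    exact ⟨by simpa [u] using bdd_O (epow_ne he 2) h'.1, fun hc => by omega⟩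
  · have h' : Prec (epow eps 2) z ∧ Prec z (epow eps 1) := h
    have := prec_lo (epow_ne he 1) h'.2
    exact ⟨by simpa [u] using this.isBigO, fun _ => by simpa [u] using this⟩
  · have h' : Approx z (epow eps 1) := h
    exact ⟨by simpa [u] using bdd_O (epow_ne he 1) h'.1, fun hc => by omega⟩
  · have h' : Prec (epow eps 1) z ∧ Prec z (epow eps (-2)) := h
    have := prec_lo (epow_ne he (-2)) h'.2
    exact ⟨by simpa [u] using this.isBigO, fun _ => by simpa [u] using this⟩
  · have h' : Approx z (epow eps (-2)) := h
    exact ⟨by simpa [u] using bdd_O (epow_ne he (-2)) h'.1, fun hc => by omega⟩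

lemma level_lb {z : ℕ → ℂ} {k : ℕ} (hz : ∀ N, z N ≠ 0) (hk1 : 1 ≤ k) (hk : k ≤ 5)
    (h : HasLevel eps z k) :
    epow eps (u (k-1)) =O[atTop] z ∧ (k % 2 = 0 → epow eps (u (k-1)) =o[atTop] z) := by
  interval_cases k
  · have h' : Approx z (epow eps 2) := h
    exact ⟨by simpa [u] using bdd_O hz h'.2, fun hc => by omega⟩
  · have h' : Prec (epow eps 2) z ∧ Prec z (epow eps 1) := h
    have := prec_lo hz h'.1
    exact ⟨by simpa [u] using this.isBigO, fun _ => by simpa [u] using this⟩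
  · have h' : Approx z (epow eps 1) := h
    exact ⟨by simpa [u] using bdd_O hz h'.2, fun hc => by omega⟩
  · have h' : Prec (epow eps 1) z ∧ Prec z (epow eps (-2)) := h
    have := prec_lo hz h'.1
    exact ⟨by simpa [u] using this.isBigO, fun _ => by simpa [u] using this⟩
  · have h' : Approx z (epow eps (-2)) := h
    exact ⟨by simpa [u] using bdd_O hz h'.2, fun hc => by omega⟩

lemma arith_up {k l : ℕ} (hk : k ≤ 5) (hl : l ≤ 5) (h : k + l ≤ 5) :
    (4 < 3 * u k + u l ∨ (3 * u k + u l = 4 ∧ (k % 2 = 0 ∨ l % 2 = 0))) ∨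
    (4 < 3 * u l + u k ∨ (3 * u l + u k = 4 ∧ (l % 2 = 0 ∨ k % 2 = 0))) := by
  interval_cases k <;> interval_cases l <;> first | omega | decide

lemma arith_lo {k l : ℕ} (hk2 : 2 ≤ k) (hk : k ≤ 5) (hl2 : 2 ≤ l) (hl : l ≤ 5)
    (h : 7 ≤ k + l) :
    (3 * u (k-1) + u (l-1) < 4 ∨ (3 * u (k-1) + u (l-1) = 4 ∧ (k % 2 = 0 ∨ l % 2 = 0))) ∧
    (3 * u (l-1) + u (k-1) < 4 ∨ (3 * u (l-1) + u (k-1) = 4 ∧ (l % 2 = 0 ∨ k % 2 = 0))) := by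
  interval_cases k <;> interval_cases l <;> first | omega | decide

lemma six_le_main {z w : ℕ → ℂ} {k l : ℕ} (he : ∀ N, 0 < eps N)
    (hlim : Tendsto eps atTop (nhds 0))
    (hk : k ≤ 5) (hl : l ≤ 5)
    (hlz : HasLevel eps z k) (hlw : HasLevel eps w l)
    (hP : epow eps 4 =O[atTop] fun N => z N ^ 3 * w N)
    (hQ : epow eps 4 =O[atTop] fun N => w N ^ 3 * z N) : 6 ≤ k + l := by
  by_contra hcon
  obtain ⟨hzO, hzs⟩ := level_ub he hk hlz
  obtain ⟨hwO, hws⟩ := level_ub he hl hlw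
  rcases arith_up hk hl (by omega) with h | h
  · exact no_both' he
      (cube_mul_lo he hlim hzO hwO (h.imp id fun ⟨h4, hp⟩ => ⟨h4, hp.imp hzs hws⟩)) hP
  · exact no_both' he
      (cube_mul_lo he hlim hwO hzO (h.imp id fun ⟨h4, hp⟩ => ⟨h4, hp.imp hws hzs⟩)) hQ

end LevelAux

namespace LevelAux
open Asymptotics Filter

variable {eps : ℕ → ℝ}

lemma le_six_main {z w : ℕ → ℂ} {k l : ℕ} (he : ∀ N, 0 < eps N)
    (hlim : Tendsto eps atTop (nhds 0))
    (hz : ∀ N, z N ≠ 0) (hw : ∀ N, w N ≠ 0)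
    (hk : k ≤ 5) (hl : l ≤ 5) (h7 : 7 ≤ k + l)
    (hlz : HasLevel eps z k) (hlw : HasLevel eps w l)
    (hedge : ((fun N => z N ^ 3 * w N) =O[atTop] epow eps 4) ∨
      ((fun N => w N ^ 3 * z N) =O[atTop] epow eps 4)) : False := by
  have hk2 : 2 ≤ k := by omega
  have hl2 : 2 ≤ l := by omega
  obtain ⟨hzO, hzs⟩ := level_lb hz (by omega) hk hlz
  obtain ⟨hwO, hws⟩ := level_lb hw (by omega) hl hlw
  obtain ⟨ha, hb⟩ := arith_lo hk2 hk hl2 hl h7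
  rcases hedge with hE | hE
  · exact no_both he
      (lo_cube_mul he hlim hzO hwO (ha.imp id fun ⟨h4, hp⟩ => ⟨h4, hp.imp hzs hws⟩)) hE
  · exact no_both he
      (lo_cube_mul he hlim hwO hzO (hb.imp id fun ⟨h4, hp⟩ => ⟨h4, hp.imp hws hzs⟩)) hE

lemma always_O (he : ∀ N, 0 < eps N) {f g : ℕ → ℂ}
    (hfg : ∀ N, f N ^ 2 * g N = 1)
    (hf : ∀ N, ‖f N‖ ≤ eps N ^ (-2 : ℤ)) :
    epow eps 4 =O[atTop] g := by
  rw [isBigO_iff]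
  refine ⟨1, Eventually.of_forall fun N => ?_⟩
  have hε := he N
  have h1 : ‖f N‖ ^ 2 * ‖g N‖ = 1 := by
    have := congrArg (‖·‖) (hfg N)
    simpa [norm_mul, norm_pow] using this
  set a := ‖f N‖ with ha
  have ha0 : 0 ≤ a := norm_nonneg _
  have hg0 : 0 ≤ ‖g N‖ := norm_nonneg _
  have hM : eps N ^ (-2 : ℤ) = (eps N ^ (2:ℕ))⁻¹ := by
    rw [zpow_neg, show ((2:ℤ)) = ((2:ℕ):ℤ) by norm_num, zpow_natCast]
  have haε : a * eps N ^ (2:ℕ) ≤ 1 := by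
    have h2 := hf N
    rw [hM] at h2
    calc a * eps N ^ (2:ℕ) ≤ (eps N ^ (2:ℕ))⁻¹ * eps N ^ (2:ℕ) :=
          mul_le_mul_of_nonneg_right h2 (by positivity)
      _ = 1 := inv_mul_cancel₀ (by positivity)
  have ha2 : a ^ 2 * eps N ^ (4:ℕ) ≤ 1 := by nlinarith [mul_nonneg ha0 (sq_nonneg (eps N))]
  have hnorm : ‖epow eps 4 N‖ = eps N ^ (4:ℕ) := by
    rw [epow, norm_zpow, Complex.norm_real, Real.norm_eq_abs, abs_of_pos hε,
      show ((4:ℤ)) = ((4:ℕ):ℤ) by norm_num, zpow_natCast]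
  rw [hnorm, one_mul]
  nlinarith [mul_le_mul_of_nonneg_right ha2 hg0]

lemma edge_O (he : ∀ N, 0 < eps N) {f g : ℕ → ℂ} (hg : ∀ N, g N ≠ 0)
    (hfg : ∀ N, f N ^ 2 * g N = 1) {L : ℂ}
    (hten : Tendsto (fun N => (eps N : ℂ) ^ 2 * f N) atTop (nhds L)) (hL : L ≠ 0) :
    g =O[atTop] epow eps 4 := by
  have h1 : Tendsto (fun N => ((eps N : ℂ) ^ 2 * f N) ^ 2) atTop (nhds (L ^ 2)) :=
    hten.pow 2
  have heq : (fun N => ((eps N : ℂ) ^ 2 * f N) ^ 2) = fun N => epow eps 4 N / g N := by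
    funext N
    rw [eq_div_iff (hg N), epow, show ((4:ℤ)) = ((4:ℕ):ℤ) by norm_num,
      zpow_natCast]
    linear_combination ((eps N : ℂ)) ^ 4 * hfg N
  rw [heq] at h1
  have h2 : Tendsto (fun N => g N / epow eps 4 N) atTop (nhds (L ^ 2)⁻¹) := by
    have := h1.inv₀ (pow_ne_zero 2 hL)
    simpa [inv_div] using this
  exact isBigO_of_div_tendsto_nhds
    (Eventually.of_forall fun N h0 => absurd h0 (epow_ne he 4 N)) _ h2

end LevelAux

open Asymptotics

theorem level_sum_of_separations (n : ℕ) (hn : 2 ≤ n) (m : Fin n → ℂ)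
    (hm : ∀ I : Finset (Fin n), I.Nonempty → ∑ k ∈ I, m k ≠ 0)
    (S : SingularSeq n m) (A B : Matrix (Fin n) (Fin n) ℕ)
    (hAB : IsZWMatrices S A B)
    (i j : Fin n) (hij : i ≠ j) (k l : ℕ) (hk : k ≤ 5) (hl : l ≤ 5)
    (hzne : ∀ N, S.z N i - S.z N j ≠ 0)
    (hwne : ∀ N, S.w N i - S.w N j ≠ 0)
    (hkz : HasLevel S.eps (fun N => S.z N i - S.z N j) k)
    (hlw : HasLevel S.eps (fun N => S.w N i - S.w N j) l) :
    (1 ≤ A i j + B i j → k + l = 6) ∧ (A i j + B i j = 0 → 6 ≤ k + l) := by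
  have hepos : ∀ N, 0 < S.eps N := S.eps_pos
  have hlim := S.eps_lim
  set zd : ℕ → ℂ := fun N => S.z N i - S.z N j with hzdd
  set wd : ℕ → ℂ := fun N => S.w N i - S.w N j with hwdd
  have hZid : ∀ N, (Zq (S.delta N) (S.z N) i j) ^ 2 * (wd N ^ 3 * zd N) = 1 := by
    intro N
    have h := S.normalize N i j hij
    calc (Zq (S.delta N) (S.z N) i j) ^ 2 * (wd N ^ 3 * zd N)
        = (S.delta N i j ^ 2 * (S.z N j - S.z N i) * (S.w N j - S.w N i)) ^ 3 := by
          simp only [Zq, hzdd, hwdd]; ring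
      _ = 1 := by rw [h]; norm_num
  have hWid : ∀ N, (Zq (S.delta N) (S.w N) i j) ^ 2 * (zd N ^ 3 * wd N) = 1 := by
    intro N
    have h := S.normalize N i j hij
    calc (Zq (S.delta N) (S.w N) i j) ^ 2 * (zd N ^ 3 * wd N)
        = (S.delta N i j ^ 2 * (S.z N j - S.z N i) * (S.w N j - S.w N i)) ^ 3 := by
          simp only [Zq, hzdd, hwdd]; ring
      _ = 1 := by rw [h]; norm_num
  have hZbd : ∀ N, ‖Zq (S.delta N) (S.z N) i j‖ ≤ S.eps N ^ (-2:ℤ) := fun N =>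
    (S.maxZ N).2 (Set.mem_union_right _ ⟨i, j, hij, rfl⟩)
  have hWbd : ∀ N, ‖Zq (S.delta N) (S.w N) i j‖ ≤ S.eps N ^ (-2:ℤ) := fun N =>
    (S.maxW N).2 (Set.mem_union_right _ ⟨i, j, hij, rfl⟩)
  have hP : epow S.eps 4 =O[atTop] (fun N => zd N ^ 3 * wd N) :=
    LevelAux.always_O hepos hWid hWbd
  have hQ : epow S.eps 4 =O[atTop] (fun N => wd N ^ 3 * zd N) :=
    LevelAux.always_O hepos hZid hZbd
  have h6 : 6 ≤ k + l := LevelAux.six_le_main hepos hlim hk hl hkz hlw hP hQ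
  refine ⟨fun hedge => ?_, fun _ => h6⟩
  have hone : A i j = 1 ∨ B i j = 1 := by
    rcases hAB.zeroOne_A i j with hA | hA <;> rcases hAB.zeroOne_B i j with hB | hB <;> omega
  have hedgeO : ((fun N => zd N ^ 3 * wd N) =O[atTop] epow S.eps 4) ∨
      ((fun N => wd N ^ 3 * zd N) =O[atTop] epow S.eps 4) := by
    rcases hone with hA | hB
    · right
      obtain ⟨L, hL⟩ := S.conv_Z i j hij
      have hL0 : L ≠ 0 := by
        rintro rfl
        exact (hAB.off_A i j hij).1 hA hL
      exact LevelAux.edge_O hepos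
        (fun N => mul_ne_zero (pow_ne_zero 3 (hwne N)) (hzne N)) hZid hL hL0
    · left
      obtain ⟨L, hL⟩ := S.conv_W i j hij
      have hL0 : L ≠ 0 := by
        rintro rfl
        exact (hAB.off_B i j hij).1 hB hL
      exact LevelAux.edge_O hepos
        (fun N => mul_ne_zero (pow_ne_zero 3 (hzne N)) (hwne N)) hWid hL hL0
  have h7 : ¬ (7 ≤ k + l) := fun h7 =>
    LevelAux.le_six_main hepos hlim hzne hwne hk hl h7 hkz hlw hedgeO
  omega
end
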